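/- Let L̂ be a symmetric positive semi-definite N×N matrix with simple eigenvalue 0 and eigenvector 1_N, and second-smallest eigenvalue λ_2 > 0. Let T = diag(T_1,...,T_N) be block diagonal with each T_i ∈ ℝ^{n×n} orthogonal partitioned as [T_{i1}, T_{i2}], and let G = diag(G_1,...,G_N) with G_i = diag(g_i I_{v_i}, 0_{n−v_i}), g_i > 0. If [T_{11} ... T_{N1}] has full row rank n, then there exists ε > 0 such that Tᵀ(L̂ ⊗ I_n)T + G ≥ ε I_{nN} (i.e., Tᵀ(L̂ ⊗ I_n)T + G is positive definite). -/

import Mathlib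

open Matrix BigOperators Kronecker

/-- Block diagonal matrix with square blocks `F i`, indexed by `Fin N × Fin n`. -/
def blockDiag (N n : ℕ) (F : Fin N → Matrix (Fin n) (Fin n) ℝ) :
    Matrix (Fin N × Fin n) (Fin N × Fin n) ℝ :=
  Matrix.of fun p q => if p.1 = q.1 then F p.1 p.2 q.2 else 0

lemma kron_one_form {N n : ℕ} (L : Matrix (Fin N) (Fin N) ℝ) (x : Fin N × Fin n → ℝ) :
    x ⬝ᵥ ((L ⊗ₖ (1 : Matrix (Fin n) (Fin n) ℝ)) *ᵥ x) =
      ∑ j : Fin n, (fun i => x (i, j)) ⬝ᵥ (L *ᵥ fun i => x (i, j)) := by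
  simp only [dotProduct, mulVec, kroneckerMap_apply, one_apply, Fintype.sum_prod_type,
    mul_ite, mul_one, mul_zero, ite_mul, zero_mul, Finset.sum_ite_eq, Finset.mem_univ,
    if_true]
  exact Finset.sum_comm

lemma kron_one_psd {N n : ℕ} {L : Matrix (Fin N) (Fin N) ℝ} (h : L.PosSemidef) :
    (L ⊗ₖ (1 : Matrix (Fin n) (Fin n) ℝ)).PosSemidef := by
  refine posSemidef_iff_dotProduct_mulVec.mpr ⟨?_, ?_⟩
  · ext ⟨i, j⟩ ⟨i', j'⟩
    have hsym := congrFun (congrFun h.1 i) i'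
    simp only [conjTranspose_apply, kroneckerMap_apply, one_apply, star_trivial] at hsym ⊢
    rw [hsym]
    by_cases hj : j = j' <;> simp [hj, eq_comm]
  · intro x
    rw [star_trivial, kron_one_form]
    exact Finset.sum_nonneg fun j _ => by simpa using h.dotProduct_mulVec_nonneg (fun i => x (i, j))

lemma posdef_sub_smul {m : Type*} [Fintype m] [DecidableEq m] {M : Matrix m m ℝ}
    (hM : M.PosDef) : ∃ ε > (0 : ℝ), (M - ε • 1).PosSemidef := by
  rcases isEmpty_or_nonempty m with h | h
  · refine ⟨1, one_pos, posSemidef_iff_dotProduct_mulVec.mpr ⟨?_, fun x => by simp [dotProduct]⟩⟩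
    ext i j
    exact isEmptyElim i
  · have hH := hM.1
    set ε := Finset.univ.inf' Finset.univ_nonempty hH.eigenvalues with hε
    have hεpos : 0 < ε := (Finset.lt_inf'_iff _).2 fun i _ => hM.eigenvalues_pos i
    refine ⟨ε, hεpos, ?_⟩
    set U : Matrix m m ℝ := (hH.eigenvectorUnitary : Matrix m m ℝ) with hUdef
    have hU : U * star U = 1 := (Matrix.mem_unitaryGroup_iff).mp hH.eigenvectorUnitary.2
    have hdiag : (diagonal (fun i => hH.eigenvalues i - ε) : Matrix m m ℝ) =
        diagonal (RCLike.ofReal ∘ hH.eigenvalues) - ε • 1 := by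
      ext i j
      by_cases hij : i = j <;> simp [diagonal_apply, hij, one_apply]
    have hrw : M - ε • 1 = U * diagonal (fun i => hH.eigenvalues i - ε) * star U := by
      rw [hdiag, Matrix.mul_sub, Matrix.sub_mul]
      conv_lhs => rw [hH.spectral_theorem, Unitary.conjStarAlgAut_apply]
      rw [Matrix.mul_smul, Matrix.smul_mul, Matrix.mul_one, hU]
    have hdpsd : (diagonal (fun i => hH.eigenvalues i - ε) : Matrix m m ℝ).PosSemidef :=
      posSemidef_diagonal_iff.mpr fun i => sub_nonneg.mpr (Finset.inf'_le _ (Finset.mem_univ i))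
    have hpsd := hdpsd.mul_mul_conjTranspose_same U
    rw [hrw]
    simpa [Matrix.star_eq_conjTranspose] using hpsd

/-- Lemma 3 of the paper: if `L̂` is symmetric PSD with simple eigenvalue `0` and
eigenvector `1`, `T = diag(T_1,…,T_N)` with each `T_i` orthogonal, and
`G = diag(g_i I_{v_i}, 0)` with `g_i > 0`, then under the joint full-rank condition
there is `ε > 0` with `Tᵀ (L̂ ⊗ Iₙ) T + G ≥ ε I`. -/
theorem stmt_8 (N n : ℕ) (Lhat : Matrix (Fin N) (Fin N) ℝ)
    (hpsd : Lhat.PosSemidef)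
    (h1 : Lhat *ᵥ (fun _ => (1 : ℝ)) = 0)
    (hker : ∀ x : Fin N → ℝ, Lhat *ᵥ x = 0 → ∃ c : ℝ, x = fun _ => c)
    (T : Fin N → Matrix (Fin n) (Fin n) ℝ)
    (hT : ∀ i, (T i)ᵀ * T i = 1) (hT' : ∀ i, T i * (T i)ᵀ = 1)
    (v : Fin N → ℕ) (hv : ∀ i, v i ≤ n)
    (g : Fin N → ℝ) (hg : ∀ i, 0 < g i)
    (hrank : Matrix.rank (Matrix.of fun (j : Fin n) (q : Σ i, Fin (v i)) =>
      T q.1 j (Fin.castLE (hv q.1) q.2)) = n) :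
    ∃ ε > (0 : ℝ),
      (((blockDiag N n T)ᵀ * (Lhat ⊗ₖ (1 : Matrix (Fin n) (Fin n) ℝ)) *
          (blockDiag N n T) +
        Matrix.diagonal (fun p : Fin N × Fin n =>
          if (p.2 : ℕ) < v p.1 then g p.1 else 0)) -
        ε • 1).PosSemidef := by
  set B := blockDiag N n T with hB
  set K := Lhat ⊗ₖ (1 : Matrix (Fin n) (Fin n) ℝ) with hK
  set d : Fin N × Fin n → ℝ := fun p => if (p.2 : ℕ) < v p.1 then g p.1 else 0 with hd
  set W : Matrix (Fin n) (Σ i, Fin (v i)) ℝ :=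
    Matrix.of fun (j : Fin n) (q : Σ i, Fin (v i)) => T q.1 j (Fin.castLE (hv q.1) q.2)
    with hW
  have hKpsd : K.PosSemidef := kron_one_psd hpsd
  have hdnonneg : ∀ p, 0 ≤ d p := by
    intro p
    by_cases hp : (p.2 : ℕ) < v p.1 <;> simp [hd, hp, (hg _).le]
  apply posdef_sub_smul
  refine posDef_iff_dotProduct_mulVec.mpr ⟨?_, ?_⟩
  · have hBT : Bᵀ = Bᴴ := by
      ext p q
      simp [conjTranspose_apply, transpose_apply]
    rw [hBT]
    exact (isHermitian_conjTranspose_mul_mul B hKpsd.1).add (isHermitian_diagonal _)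
  · intro x hx
    have hsplit : star x ⬝ᵥ ((Bᵀ * K * B + diagonal d) *ᵥ x) =
        (B *ᵥ x) ⬝ᵥ (K *ᵥ (B *ᵥ x)) + x ⬝ᵥ (diagonal d *ᵥ x) := by
      rw [star_trivial, add_mulVec, dotProduct_add]
      congr 1
      rw [← mulVec_mulVec, ← mulVec_mulVec, dotProduct_mulVec x Bᵀ, vecMul_transpose]
    have hA_nonneg : 0 ≤ (B *ᵥ x) ⬝ᵥ (K *ᵥ (B *ᵥ x)) := by
      simpa using hKpsd.dotProduct_mulVec_nonneg (B *ᵥ x)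
    have hG_eq : x ⬝ᵥ (diagonal d *ᵥ x) = ∑ p, d p * (x p * x p) := by
      simp only [dotProduct, mulVec_diagonal]
      exact Finset.sum_congr rfl fun p _ => by ring
    have hG_nonneg : 0 ≤ x ⬝ᵥ (diagonal d *ᵥ x) := by
      rw [hG_eq]
      exact Finset.sum_nonneg fun p _ => mul_nonneg (hdnonneg p) (mul_self_nonneg _)
    rw [hsplit]
    rcases lt_or_eq_of_le (add_nonneg hA_nonneg hG_nonneg) with hlt | heq
    · exact hlt
    exfalso
    apply hx
    have hA0 : (B *ᵥ x) ⬝ᵥ (K *ᵥ (B *ᵥ x)) = 0 := by linarith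
    have hG0 : x ⬝ᵥ (diagonal d *ᵥ x) = 0 := by linarith
    -- entries where d is positive vanish
    have hxd : ∀ p : Fin N × Fin n, (p.2 : ℕ) < v p.1 → x p = 0 := by
      intro p hp
      rw [hG_eq] at hG0
      have h0 := (Finset.sum_eq_zero_iff_of_nonneg fun q _ =>
        mul_nonneg (hdnonneg q) (mul_self_nonneg (x q))).mp hG0 p (Finset.mem_univ p)
      have hdp : d p = g p.1 := by simp [hd, hp]
      rw [hdp] at h0
      exact mul_self_eq_zero.mp ((mul_eq_zero.mp h0).resolve_left (ne_of_gt (hg p.1)))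
    -- kernel of K
    have hKy : K *ᵥ (B *ᵥ x) = 0 :=
      (hKpsd.dotProduct_mulVec_zero_iff (B *ᵥ x)).mp (by simpa using hA0)
    set y := B *ᵥ x with hy
    have hcols : ∀ j : Fin n, Lhat *ᵥ (fun i => y (i, j)) = 0 := by
      intro j
      funext i
      have h0 := congrFun hKy (i, j)
      simp only [mulVec, dotProduct, hK, kroneckerMap_apply, one_apply, Fintype.sum_prod_type,
        mul_ite, mul_one, mul_zero, ite_mul, zero_mul, Finset.sum_ite_eq, Finset.mem_univ,
        if_true, Pi.zero_apply] at h0 ⊢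
      exact h0
    choose c hc using fun j => hker _ (hcols j)
    have hyc : ∀ i j, y (i, j) = c j := fun i j => congrFun (hc j) i
    have hyT : ∀ i : Fin N, (T i) *ᵥ (fun j => x (i, j)) = c := by
      intro i
      funext j
      have h2 : y (i, j) = ∑ j', T i j j' * x (i, j') := by
        simp only [hy, hB, mulVec, dotProduct, _root_.blockDiag, Matrix.of_apply,
          Fintype.sum_prod_type, ite_mul, zero_mul]
        rw [Finset.sum_comm]
        simp [Finset.sum_ite_eq]
      have h3 : ((T i) *ᵥ (fun j' => x (i, j'))) j = ∑ j', T i j j' * x (i, j') := by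
        simp [mulVec, dotProduct]
      rw [h3, ← h2, hyc]
    have hxc : ∀ i : Fin N, (fun j => x (i, j)) = (T i)ᵀ *ᵥ c := by
      intro i
      have h4 : (T i)ᵀ *ᵥ ((T i) *ᵥ fun j => x (i, j)) = (T i)ᵀ *ᵥ c :=
        congrArg _ (hyT i)
      rw [mulVec_mulVec, hT i, one_mulVec] at h4
      exact h4
    have hcW : c ᵥ* W = 0 := by
      funext q
      have hlt : ((Fin.castLE (hv q.1) q.2 : Fin n) : ℕ) < v q.1 := by
        simpa using q.2.2
      have hx0 : x (q.1, Fin.castLE (hv q.1) q.2) = 0 := hxd _ hlt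
      have heq2 := congrFun (hxc q.1) (Fin.castLE (hv q.1) q.2)
      have h5 : (c ᵥ* W) q = ∑ j, c j * T q.1 j (Fin.castLE (hv q.1) q.2) := by
        simp [vecMul, dotProduct, hW]
      have h6 : ((T q.1)ᵀ *ᵥ c) (Fin.castLE (hv q.1) q.2) =
          ∑ j, c j * T q.1 j (Fin.castLE (hv q.1) q.2) := by
        simp [mulVec, dotProduct, transpose_apply, mul_comm]
      show (c ᵥ* W) q = 0
      rw [h5, ← h6, ← heq2]
      exact hx0
    have hsurj : ∃ u, W *ᵥ u = c := by
      have hrange : LinearMap.range W.mulVecLin = ⊤ := by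
        apply Submodule.eq_top_of_finrank_eq
        have h6 : W.rank = Module.finrank ℝ (Fin n → ℝ) := by
          rw [hrank, Module.finrank_fin_fun]
        exact h6
      have hmem : c ∈ LinearMap.range W.mulVecLin := by rw [hrange]; trivial
      obtain ⟨u, hu⟩ := hmem
      exact ⟨u, by simpa [Matrix.mulVecLin_apply] using hu⟩
    obtain ⟨u, hu⟩ := hsurj
    have hc0 : c = 0 := by
      have h7 : c ⬝ᵥ (W *ᵥ u) = 0 := by
        rw [dotProduct_mulVec, hcW, zero_dotProduct]
      rw [hu] at h7
      exact dotProduct_self_eq_zero.mp h7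
    funext p
    have h8 := congrFun (hxc p.1) p.2
    rw [hc0] at h8
    simpa using h8
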